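/- Let p be an odd prime, e ≥ 1, n = p^e, and 1 ≤ f₁ < f₂ ≤ e. Then the groups G_{f₁} = ⟨g, h | g^n = h^n = 1, g⁻¹hg = h^(1+p^{f₁})⟩ and G_{f₂} = ⟨g, h | g^n = h^n = 1, g⁻¹hg = h^(1+p^{f₂})⟩ are not isomorphic. In particular, G_e ≅ C_n × C_n and G_f is nonabelian for f < e. -/

import Mathlib

/-- The relations for the group `G_f = ⟨g, h | g^n = h^n = 1, g⁻¹hg = h^q⟩`. -/
def fermatRels (n q : ℕ) : Set (FreeGroup (Fin 2)) :=
  {FreeGroup.of 0 ^ n, FreeGroup.of 1 ^ n,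
   (FreeGroup.of 0)⁻¹ * FreeGroup.of 1 * FreeGroup.of 0 * (FreeGroup.of 1 ^ q)⁻¹}

/-- The group `G_f` (with `n = p^e`, `q = 1 + p^f`). -/
abbrev Gf (n q : ℕ) := PresentedGroup (fermatRels n q)

/-- The generator `g` of `G_f`. -/
def gGen (n q : ℕ) : Gf n q := PresentedGroup.of 0

/-- The generator `h` of `G_f`. -/
def hGen (n q : ℕ) : Gf n q := PresentedGroup.of 1

open Multiplicative

namespace FermatAux

variable {n q : ℕ}

lemma mk_rel_eq_one {r : FreeGroup (Fin 2)} (hr : r ∈ fermatRels n q) :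
    PresentedGroup.mk (fermatRels n q) r = 1 :=
  (QuotientGroup.eq_one_iff _).2 (Subgroup.subset_normalClosure hr)

lemma gGen_pow (n q : ℕ) : gGen n q ^ n = 1 := by
  have := mk_rel_eq_one (n := n) (q := q) (r := FreeGroup.of 0 ^ n) (Set.mem_insert _ _)
  rwa [map_pow] at this

lemma hGen_pow (n q : ℕ) : hGen n q ^ n = 1 := by
  have := mk_rel_eq_one (n := n) (q := q) (r := FreeGroup.of 1 ^ n)
    (Set.mem_insert_of_mem _ (Set.mem_insert _ _))
  rwa [map_pow] at this

lemma conj_rel (n q : ℕ) :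
    (gGen n q)⁻¹ * hGen n q * gGen n q = hGen n q ^ q := by
  have := mk_rel_eq_one (n := n) (q := q)
    (r := (FreeGroup.of 0)⁻¹ * FreeGroup.of 1 * FreeGroup.of 0 * (FreeGroup.of 1 ^ q)⁻¹)
    (Set.mem_insert_of_mem _ (Set.mem_insert_of_mem _ rfl))
  simp only [map_mul, map_inv, map_pow] at this
  exact mul_inv_eq_one.mp this

/-- Build a homomorphism out of `Gf n q`. -/
def toGf {G : Type*} [Group G] (a b : G) (ha : a ^ n = 1) (hb : b ^ n = 1)
    (hc : a⁻¹ * b * a = b ^ q) : Gf n q →* G :=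
  PresentedGroup.toGroup (f := ![a, b]) (by
    intro r hr
    simp only [fermatRels, Set.mem_insert_iff, Set.mem_singleton_iff] at hr
    rcases hr with rfl | rfl | rfl
    · simpa using ha
    · simpa using hb
    · simp only [map_mul, map_inv, map_pow, FreeGroup.lift_apply_of, Matrix.cons_val_zero,
        Matrix.cons_val_one, Matrix.head_cons]
      rw [hc, mul_inv_cancel])

@[simp] lemma toGf_g {G : Type*} [Group G] (a b : G) (ha : a ^ n = 1) (hb : b ^ n = 1)
    (hc : a⁻¹ * b * a = b ^ q) : toGf a b ha hb hc (gGen n q) = a := by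
  exact PresentedGroup.toGroup.of (f := ![a, b]) (x := (0 : Fin 2)) _

@[simp] lemma toGf_h {G : Type*} [Group G] (a b : G) (ha : a ^ n = 1) (hb : b ^ n = 1)
    (hc : a⁻¹ * b * a = b ^ q) : toGf a b ha hb hc (hGen n q) = b := by
  exact PresentedGroup.toGroup.of (f := ![a, b]) (x := (1 : Fin 2)) _

/-- Homomorphisms out of `Gf n q` correspond to pairs satisfying the relations. -/
def homEquiv (n q : ℕ) (G : Type*) [Group G] :
    (Gf n q →* G) ≃
      {x : G × G // x.1 ^ n = 1 ∧ x.2 ^ n = 1 ∧ x.1⁻¹ * x.2 * x.1 = x.2 ^ q} where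
  toFun ψ := ⟨(ψ (gGen n q), ψ (hGen n q)), by
    refine ⟨?_, ?_, ?_⟩
    · rw [← map_pow, gGen_pow, map_one]
    · rw [← map_pow, hGen_pow, map_one]
    · rw [← map_inv, ← map_mul, ← map_mul, conj_rel, map_pow]⟩
  invFun x := toGf x.1.1 x.1.2 x.2.1 x.2.2.1 x.2.2.2
  left_inv ψ := by
    ext x
    fin_cases x
    · exact toGf_g _ _ _ _ _
    · exact toGf_h _ _ _ _ _
  right_inv x := by
    refine Subtype.ext (Prod.ext ?_ ?_) <;> simp

/-- Precomposition with an isomorphism. -/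
def isoHomEquiv {G₁ G₂ A : Type*} [Group G₁] [Group G₂] [Group A] (E : G₁ ≃* G₂) :
    (G₁ →* A) ≃ (G₂ →* A) where
  toFun ψ := ψ.comp E.symm.toMonoidHom
  invFun ψ := ψ.comp E.toMonoidHom
  left_inv ψ := by ext x; simp
  right_inv ψ := by ext x; simp

lemma cond_iff {A : Type*} [CommGroup A] (a b : A) (k : ℕ) :
    a⁻¹ * b * a = b ^ (1 + k) ↔ b ^ k = 1 := by
  rw [pow_add, pow_one, mul_comm a⁻¹ b, mul_assoc, inv_mul_cancel, mul_one]
  exact left_eq_mul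

/-- Splitting of the relation-solutions set in a commutative group of exponent dividing n. -/
def splitEquiv {A : Type*} [CommGroup A] (n k : ℕ) (hA : ∀ a : A, a ^ n = 1) :
    {x : A × A // x.1 ^ n = 1 ∧ x.2 ^ n = 1 ∧ x.1⁻¹ * x.2 * x.1 = x.2 ^ (1 + k)} ≃
      A × {b : A // b ^ k = 1} where
  toFun z := (z.1.1, ⟨z.1.2, (cond_iff _ _ _).1 z.2.2.2⟩)
  invFun w := ⟨(w.1, w.2.1), hA _, hA _, (cond_iff _ _ _).2 w.2.2⟩
  left_inv _ := rfl
  right_inv _ := rfl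

lemma ofAdd_pow {m : ℕ} (a : ZMod m) (k : ℕ) :
    (ofAdd a) ^ k = ofAdd ((k : ZMod m) * a) := by
  rw [← ofAdd_nsmul, nsmul_eq_mul]

lemma zmod_pow_self {m : ℕ} (x : Multiplicative (ZMod m)) : x ^ m = 1 := by
  have : x = ofAdd (toAdd x) := rfl
  rw [this, ofAdd_pow, ZMod.natCast_self, zero_mul, ofAdd_zero]

/-- The power homomorphism from `Multiplicative (ZMod n)`. -/
def zmodPow {G : Type*} [Group G] (n : ℕ) [NeZero n] (g : G) (hg : g ^ n = 1) :
    Multiplicative (ZMod n) →* G where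
  toFun a := g ^ (toAdd a).val
  map_one' := by simp
  map_mul' a b := by
    show g ^ (toAdd a + toAdd b).val = g ^ (toAdd a).val * g ^ (toAdd b).val
    rw [ZMod.val_add, ← pow_eq_pow_mod _ hg, pow_add]

lemma zmodPow_apply {G : Type*} [Group G] (n : ℕ) [NeZero n] (g : G) (hg : g ^ n = 1)
    (a : Multiplicative (ZMod n)) : zmodPow n g hg a = g ^ (toAdd a).val := rfl

lemma zmodPow_ofAdd_one {G : Type*} [Group G] (n : ℕ) [Fact (1 < n)] (g : G) (hg : g ^ n = 1) :
    zmodPow n g hg (ofAdd 1) = g := by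
  show g ^ (toAdd (ofAdd (1 : ZMod n))).val = g
  rw [toAdd_ofAdd, ZMod.val_one, pow_one]

lemma zmodHom_ext {G : Type*} [Group G] {n : ℕ} [NeZero n]
    {φ ψ : Multiplicative (ZMod n) →* G} (h : φ (ofAdd 1) = ψ (ofAdd 1)) : φ = ψ := by
  refine MonoidHom.ext fun x => ?_
  have hx : x = (ofAdd (1 : ZMod n)) ^ ZMod.val (toAdd x) := by
    rw [ofAdd_pow, mul_one, ZMod.natCast_rightInverse (toAdd x)]
    rfl
  rw [hx, map_pow, map_pow, h]

/-- Multiplication action of units as multiplicative automorphisms. -/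
def mulAutZMod (m : ℕ) : (ZMod m)ˣ →* MulAut (Multiplicative (ZMod m)) where
  toFun v :=
    { toFun := fun x => ofAdd ((v : ZMod m) * toAdd x)
      invFun := fun x => ofAdd (((v⁻¹ : (ZMod m)ˣ) : ZMod m) * toAdd x)
      left_inv := fun x => by
        simp only [toAdd_ofAdd, ← mul_assoc, ← Units.val_mul, inv_mul_cancel, Units.val_one,
          one_mul]
        rfl
      right_inv := fun x => by
        simp only [toAdd_ofAdd, ← mul_assoc, ← Units.val_mul, mul_inv_cancel, Units.val_one,
          one_mul]
        rfl
      map_mul' := fun x y => by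
        simp only [toAdd_mul, mul_add, ofAdd_add] }
  map_one' := by
    ext x
    simp only [Units.val_one, one_mul]
    rfl
  map_mul' v w := by
    ext x
    show ofAdd ((↑(v * w) : ZMod m) * toAdd x) = ofAdd ((v : ZMod m) * ((w : ZMod m) * toAdd x))
    rw [Units.val_mul, mul_assoc]

lemma mulAutZMod_apply (m : ℕ) (v : (ZMod m)ˣ) (x : Multiplicative (ZMod m)) :
    mulAutZMod m v x = ofAdd ((v : ZMod m) * toAdd x) := rfl

end FermatAux

open FermatAux

theorem stmt16 (p e : ℕ) (hp : p.Prime) (hodd : Odd p) (he : 1 ≤ e)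
    (f₁ f₂ : ℕ) (hf1 : 1 ≤ f₁) (h12 : f₁ < f₂) (hf2 : f₂ ≤ e)
    (n : ℕ) (hn : n = p ^ e) :
    IsEmpty (Gf n (1 + p ^ f₁) ≃* Gf n (1 + p ^ f₂)) ∧
    Nonempty (Gf n (1 + p ^ e) ≃* Multiplicative (ZMod n) × Multiplicative (ZMod n)) ∧
    (∀ f : ℕ, 1 ≤ f → f < e → ¬ ∀ a b : Gf n (1 + p ^ f), a * b = b * a) := by
  have hp1 := hp.one_lt
  have hn1 : 1 < n := by
    rw [hn]; exact Nat.one_lt_pow (by omega) hp1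
  haveI : NeZero n := ⟨by omega⟩
  haveI : Fact (1 < n) := ⟨hn1⟩
  refine ⟨?_, ?_, ?_⟩
  · -- Part 1: non-isomorphism
    constructor
    intro E
    haveI : NeZero (p ^ f₂) := ⟨(Nat.pow_pos (n := f₂) hp.pos).ne'⟩
    set A := Multiplicative (ZMod (p ^ f₂)) with hA_def
    have hA : ∀ a : A, a ^ n = 1 := by
      intro a
      have : a = ofAdd (toAdd a) := rfl
      rw [this, ofAdd_pow]
      have : (n : ZMod (p ^ f₂)) = 0 := by
        rw [ZMod.natCast_eq_zero_iff, hn]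
        exact pow_dvd_pow p hf2
      rw [this, zero_mul, ofAdd_zero]
    have c1 : Nat.card (Gf n (1 + p ^ f₁) →* A) =
        Nat.card A * Nat.card {b : A // b ^ (p ^ f₁) = 1} := by
      rw [Nat.card_congr ((homEquiv n (1 + p ^ f₁) A).trans (splitEquiv n (p ^ f₁) hA)),
        Nat.card_prod]
    have c2 : Nat.card (Gf n (1 + p ^ f₂) →* A) =
        Nat.card A * Nat.card {b : A // b ^ (p ^ f₂) = 1} := by
      rw [Nat.card_congr ((homEquiv n (1 + p ^ f₂) A).trans (splitEquiv n (p ^ f₂) hA)),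
        Nat.card_prod]
    have hfull : Nat.card {b : A // b ^ (p ^ f₂) = 1} = Nat.card A :=
      Nat.card_congr (Equiv.subtypeUnivEquiv (fun b => zmod_pow_self b))
    have hlt : Nat.card {b : A // b ^ (p ^ f₁) = 1} < Nat.card A := by
      classical
      have hwit : ¬ ((ofAdd (1 : ZMod (p ^ f₂)) : A) ^ (p ^ f₁) = 1) := by
        rw [ofAdd_pow, mul_one]
        intro hcontra
        have : ((p ^ f₁ : ℕ) : ZMod (p ^ f₂)) = 0 := by
          have := congrArg toAdd hcontra
          simpa using this
        rw [ZMod.natCast_eq_zero_iff] at this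
        have := (Nat.pow_dvd_pow_iff_le_right hp1).1 this
        omega
      rw [Nat.card_eq_fintype_card, Nat.card_eq_fintype_card]
      exact Fintype.card_subtype_lt (x := ofAdd 1) hwit
    have hpos : 0 < Nat.card A := Nat.card_pos
    have hcards : Nat.card (Gf n (1 + p ^ f₁) →* A) = Nat.card (Gf n (1 + p ^ f₂) →* A) :=
      Nat.card_congr (isoHomEquiv E)
    rw [c1, c2, hfull] at hcards
    have := Nat.eq_of_mul_eq_mul_left hpos hcards
    omega
  · -- Part 2: Gf n (1+p^e) ≅ ZMod n × ZMod n
    set g := gGen n (1 + p ^ e) with hg_def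
    set h := hGen n (1 + p ^ e) with hh_def
    have hgn : g ^ n = 1 := gGen_pow n _
    have hhn : h ^ n = 1 := hGen_pow n _
    have hpe : h ^ p ^ e = 1 := by
      have hkey : h ^ n = h ^ p ^ e := congrArg (fun k => h ^ k) hn
      rw [← hkey]
      exact hhn
    have hch : g⁻¹ * h * g = h := by
      have hc := conj_rel n (1 + p ^ e)
      rw [pow_add, pow_one, hpe, mul_one] at hc
      exact hc
    have hcomm : Commute g h := by
      show g * h = h * g
      conv_lhs => rw [← hch]
      group
    have hMexp : ∀ x : Multiplicative (ZMod n) × Multiplicative (ZMod n), x ^ n = 1 := by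
      intro x
      have h1 : (x ^ n).1 = x.1 ^ n := map_pow (MonoidHom.fst _ _) x n
      have h2 : (x ^ n).2 = x.2 ^ n := map_pow (MonoidHom.snd _ _) x n
      refine Prod.ext ?_ ?_ <;> simp [h1, h2, zmod_pow_self]
    have hMrel : ∀ a b : Multiplicative (ZMod n) × Multiplicative (ZMod n),
        a⁻¹ * b * a = b ^ (1 + p ^ e) := by
      intro a b
      have hbe : b ^ p ^ e = 1 := by
        have hkey : b ^ n = b ^ p ^ e := congrArg (fun k => b ^ k) hn
        rw [← hkey]
        exact hMexp b
      rw [pow_add, pow_one, hbe, mul_one, mul_comm a⁻¹ b, mul_assoc,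
        inv_mul_cancel, mul_one]
    set aM : Multiplicative (ZMod n) × Multiplicative (ZMod n) := (ofAdd 1, 1) with haM
    set bM : Multiplicative (ZMod n) × Multiplicative (ZMod n) := (1, ofAdd 1) with hbM
    set pi := toGf aM bM (hMexp aM) (hMexp bM) (hMrel aM bM) with hpi
    set rg := zmodPow n g hgn with hrg
    set rh := zmodPow n h hhn with hrh
    have hcommpow : ∀ (x y : Multiplicative (ZMod n)), Commute (rg x) (rh y) := by
      intro x y
      exact hcomm.pow_pow _ _
    set rho := MonoidHom.noncommCoprod rg rh hcommpow with hrho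
    have hrho_apply : ∀ x : Multiplicative (ZMod n) × Multiplicative (ZMod n),
        rho x = rg x.1 * rh x.2 := fun x => rfl
    have hpig : pi g = aM := toGf_g _ _ _ _ _
    have hpih : pi h = bM := toGf_h _ _ _ _ _
    have hrhoa : rho ((ofAdd 1 : Multiplicative (ZMod n)), 1) = g := by
      rw [hrho_apply]
      simp only [map_one, mul_one]
      rw [hrg, zmodPow_ofAdd_one]
    have hrhob : rho ((1 : Multiplicative (ZMod n)), ofAdd 1) = h := by
      rw [hrho_apply]
      simp only [map_one, one_mul]
      rw [hrh, zmodPow_ofAdd_one]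
    have key1 : ∀ x : Multiplicative (ZMod n), pi (rho (x, 1)) = (x, 1) := by
      intro x
      have := zmodHom_ext (n := n)
        (φ := (pi.comp rho).comp (MonoidHom.inl _ _))
        (ψ := MonoidHom.inl (Multiplicative (ZMod n)) (Multiplicative (ZMod n))) ?_
      · exact DFunLike.congr_fun this x
      · show pi (rho (ofAdd 1, 1)) = (ofAdd 1, 1)
        rw [hrhoa, hpig]
    have key2 : ∀ x : Multiplicative (ZMod n), pi (rho (1, x)) = (1, x) := by
      intro x
      have := zmodHom_ext (n := n)
        (φ := (pi.comp rho).comp (MonoidHom.inr _ _))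
        (ψ := MonoidHom.inr (Multiplicative (ZMod n)) (Multiplicative (ZMod n))) ?_
      · exact DFunLike.congr_fun this x
      · show pi (rho (1, ofAdd 1)) = (1, ofAdd 1)
        rw [hrhob, hpih]
    have hright : ∀ x : Multiplicative (ZMod n) × Multiplicative (ZMod n),
        pi (rho x) = x := by
      intro x
      have hx : x = (x.1, 1) * (1, x.2) := by
        refine Prod.ext ?_ ?_ <;> simp
      rw [hx, map_mul, map_mul, key1, key2]
    have hleft : ∀ y : Gf n (1 + p ^ e), rho (pi y) = y := by
      have heq : rho.comp pi = MonoidHom.id (Gf n (1 + p ^ e)) := by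
        apply PresentedGroup.ext
        intro x
        fin_cases x
        · show rho (pi g) = g
          rw [hpig, hrhoa]
        · show rho (pi h) = h
          rw [hpih, hrhob]
      intro y
      exact DFunLike.congr_fun heq y
    exact ⟨{ toFun := pi, invFun := rho, left_inv := hleft, right_inv := hright,
             map_mul' := map_mul pi }⟩
  · -- Part 3: nonabelian
    intro f hf1' hfe hab
    have hppos : 0 < p ^ f := Nat.pow_pos (n := f) hp.pos
    have hndvd : ¬ p ∣ 1 + p ^ f := by
      intro hd
      have h2 : p ∣ p ^ f := dvd_pow_self p (by omega)
      rw [add_comm] at hd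
      have h3 : p ∣ 1 := (Nat.dvd_add_right h2).1 hd
      have := Nat.le_of_dvd one_pos h3
      omega
    have hcop : Nat.Coprime (1 + p ^ f) n := by
      rw [hn]
      exact Nat.Coprime.pow_right e
        (Nat.coprime_comm.mp ((Nat.Prime.coprime_iff_not_dvd hp).2 hndvd))
    set u : (ZMod n)ˣ := ZMod.unitOfCoprime (1 + p ^ f) hcop with hu_def
    have huval : (u : ZMod n) = ((1 + p ^ f : ℕ) : ZMod n) := ZMod.coe_unitOfCoprime _ _
    -- u^n = 1 via lifting the exponent
    have hmodeq : (1 + p ^ f) ^ n ≡ 1 [MOD n] := by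
      rw [hn]
      have hdvd : (p : ℤ) ∣ ((1 + p ^ f : ℕ) : ℤ) - 1 := by
        have hcast : ((1 + p ^ f : ℕ) : ℤ) - 1 = (p : ℤ) ^ f := by push_cast; ring
        rw [hcast]
        exact dvd_pow_self _ (by omega)
      have hnd2 : ¬ (p : ℤ) ∣ ((1 + p ^ f : ℕ) : ℤ) := by
        rw [Int.natCast_dvd_natCast]
        exact hndvd
      have hlte := Int.emultiplicity_pow_sub_pow hp hodd hdvd hnd2 (p ^ e)
      have h1 : emultiplicity ((p : ℤ)) (((1 + p ^ f : ℕ) : ℤ) - 1) = f := by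
        have hcast : ((1 + p ^ f : ℕ) : ℤ) - 1 = (p : ℤ) ^ f := by push_cast; ring
        rw [hcast]
        exact emultiplicity_pow_self_of_prime (Nat.prime_iff_prime_int.mp hp) f
      have h2 : emultiplicity p (p ^ e) = e :=
        emultiplicity_pow_self_of_prime hp.prime e
      rw [h1, h2] at hlte
      have hdvd2 : ((p : ℤ)) ^ e ∣ ((1 + p ^ f : ℕ) : ℤ) ^ (p ^ e) - 1 ^ (p ^ e) := by
        apply pow_dvd_of_le_emultiplicity
        rw [hlte]
        exact_mod_cast le_add_self
      have hdvd3 : (p ^ e : ℕ) ∣ (1 + p ^ f) ^ (p ^ e) - 1 := by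
        have hc : ((p ^ e : ℕ) : ℤ) ∣ (((1 + p ^ f) ^ (p ^ e) - 1 : ℕ) : ℤ) := by
          rw [Nat.cast_sub (Nat.one_le_pow _ _ (by omega))]
          push_cast
          simpa using hdvd2
        exact_mod_cast Int.natCast_dvd_natCast.mp hc
      exact ((Nat.modEq_iff_dvd' (Nat.one_le_pow _ _ (by omega))).2 hdvd3).symm
    have hun : u ^ n = 1 := by
      apply Units.ext
      rw [Units.val_pow_eq_pow_val, huval, Units.val_one, ← Nat.cast_pow,
        show (1 : ZMod n) = ((1 : ℕ) : ZMod n) by simp, ZMod.natCast_eq_natCast_iff]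
      exact hmodeq
    have huinvn : (u⁻¹) ^ n = 1 := by
      rw [inv_pow, hun, inv_one]
    have hAn : (mulAutZMod n u⁻¹) ^ n = 1 := by
      rw [← map_pow, huinvn, map_one]
    set phi := zmodPow n (mulAutZMod n u⁻¹) hAn with hphi
    have hphi1 : phi (ofAdd 1) = mulAutZMod n u⁻¹ := zmodPow_ofAdd_one n _ hAn
    set aM : Multiplicative (ZMod n) ⋊[phi] Multiplicative (ZMod n) :=
      SemidirectProduct.inr (ofAdd 1) with haM
    set bM : Multiplicative (ZMod n) ⋊[phi] Multiplicative (ZMod n) :=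
      SemidirectProduct.inl (ofAdd 1) with hbM
    have haMn : aM ^ n = 1 := by
      rw [haM, show (SemidirectProduct.inr (φ := phi) (ofAdd 1)) ^ n
          = SemidirectProduct.inr (ofAdd (1 : ZMod n) ^ n) from (map_pow _ _ _).symm,
        zmod_pow_self, map_one]
    have hbMn : bM ^ n = 1 := by
      rw [hbM, show (SemidirectProduct.inl (φ := phi) (ofAdd 1)) ^ n
          = SemidirectProduct.inl (ofAdd (1 : ZMod n) ^ n) from (map_pow _ _ _).symm,
        zmod_pow_self, map_one]
    have hrel : aM⁻¹ * bM * aM = bM ^ (1 + p ^ f) := by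
      rw [haM, hbM, ← map_pow, ← map_inv,
        ← SemidirectProduct.inl_aut_inv (φ := phi) (ofAdd 1) (ofAdd 1)]
      congr 1
      rw [hphi1, ← map_inv, inv_inv, mulAutZMod_apply, huval, ofAdd_pow, toAdd_ofAdd]
    set pi := toGf aM bM haMn hbMn hrel with hpi
    have hpig : pi (gGen n (1 + p ^ f)) = aM := toGf_g _ _ _ _ _
    have hpih : pi (hGen n (1 + p ^ f)) = bM := toGf_h _ _ _ _ _
    have hcontra := congrArg pi (hab (gGen n (1 + p ^ f)) (hGen n (1 + p ^ f)))
    rw [map_mul, map_mul, hpig, hpih] at hcontra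
    have hlhs : aM * bM = SemidirectProduct.inl (phi (ofAdd 1) (ofAdd 1)) * aM := by
      rw [haM, hbM, SemidirectProduct.inl_aut (φ := phi) (ofAdd 1) (ofAdd 1), mul_assoc,
        ← map_mul, inv_mul_cancel, map_one (SemidirectProduct.inr (φ := phi)), mul_one]
    rw [hlhs] at hcontra
    have hcancel : SemidirectProduct.inl (φ := phi) (phi (ofAdd 1) (ofAdd 1)) = bM :=
      mul_right_cancel hcontra
    rw [hbM] at hcancel
    have heq2 : phi (ofAdd 1) (ofAdd 1) = ofAdd 1 := SemidirectProduct.inl_injective hcancel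
    rw [hphi1, mulAutZMod_apply] at heq2
    have heq3 : ((u⁻¹ : (ZMod n)ˣ) : ZMod n) * toAdd (ofAdd (1 : ZMod n)) = 1 :=
      congrArg toAdd heq2
    rw [toAdd_ofAdd, mul_one] at heq3
    have heq4 : (u : (ZMod n)ˣ) = 1 := by
      have h5 : (u⁻¹ : (ZMod n)ˣ) = 1 := Units.ext (by simpa using heq3)
      simpa using congrArg (·⁻¹) h5
    have heq5 : ((1 + p ^ f : ℕ) : ZMod n) = 1 := by
      rw [← huval, heq4, Units.val_one]
    have heq6 : ((p ^ f : ℕ) : ZMod n) = 0 := by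
      push_cast at heq5 ⊢
      linear_combination heq5
    rw [ZMod.natCast_eq_zero_iff, hn] at heq6
    have := (Nat.pow_dvd_pow_iff_le_right hp1).1 heq6
    omega
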